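/- Let p be an odd prime, let λ be a symmetric partition with empty p-core, let X be a β-set for λ with |X| ≡ 0 (mod p), and let θ = θ(X). Suppose y = γ + (k−1)p ∉ X and x = γ + kp ∈ X for some 0 ≤ γ ≤ p − 1 and k ≥ 1, so (y,x) is a p-hook of X and (k−1, k) is a hook of the induced β-set X_γ, corresponding to a node (i,j) of the Young diagram of λ_γ (with i = #{z ∈ X_γ : z ≥ k} and j = #{z ∈ ℕ : z ∉ X_γ, z ≤ k−1}). Then y > θ (i.e. the p-hook lies entirely to the right of θ) if and only if j > i (the node lies on an arm of λ_γ), and x < θ (i.e. the p-hook lies entirely to the left of θ) if and only if j < i (the node lies on a leg of λ_γ). -/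
import Mathlib


/-- A partition of a natural number, given as a weakly decreasing,
eventually-zero sequence of parts (0-indexed: `parts i` is the (i+1)-st part). -/
structure NPartition where
  parts : ℕ → ℕ
  antitone : ∀ ⦃i j : ℕ⦄, i ≤ j → parts j ≤ parts i
  finite_support : ∃ N : ℕ, ∀ n : ℕ, N ≤ n → parts n = 0

/-- The conjugate (dual) partition: `conj j` is the (j+1)-st part of `λ*`,
i.e. the number of indices `i` with `parts i > j`. -/
noncomputable def NPartition.conj (μ : NPartition) (j : ℕ) : ℕ :=
  Nat.card {i : ℕ // j < μ.parts i}

/-- A partition is symmetric if it equals its conjugate. -/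
def IsSymmetric (μ : NPartition) : Prop := ∀ j : ℕ, μ.conj j = μ.parts j

/-- `X` is a β-set for `μ`: if `X = {x_1 < … < x_k}` then the parts of `μ`
are `λ_i = x_{k+1−i} − (k − i)` (discarding zero parts); equivalently the
elements of `X` are exactly `parts i + (card X − 1 − i)` for `i < card X`. -/
def IsBetaSet (X : Finset ℕ) (μ : NPartition) : Prop :=
  ∀ n : ℕ, n ∈ X ↔ ∃ i : ℕ, i < X.card ∧ n + i + 1 = μ.parts i + X.card

/-- A hook of a β-set `X`: a pair `(y, x)` with `y ∉ X`, `x ∈ X`, `y < x`. -/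
def IsBetaHook (X : Finset ℕ) (y x : ℕ) : Prop := y ∉ X ∧ x ∈ X ∧ y < x

/-- `θ(X) = t + 1/2`: the number of beads of `X` strictly to the right of `t`
equals the number of spaces (nonnegative integers not in `X`) at positions `≤ t`. -/
def IsTheta (X : Finset ℕ) (t : ℤ) : Prop :=
  -1 ≤ t ∧ (X.filter (fun x : ℕ => t < (x : ℤ))).card =
    ((Finset.range (t + 1).toNat).filter (fun y => y ∉ X)).card

/-- Removing one hook `(y, x)` from the β-set `X` yields `X'`. -/
def RemoveHook (X X' : Finset ℕ) : Prop :=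
  ∃ y x : ℕ, y ∉ X ∧ x ∈ X ∧ y < x ∧ X' = insert y (X.erase x)

/-- Removing one hook of length `p` from the β-set `X` yields `X'`. -/
def RemovePHook (p : ℕ) (X X' : Finset ℕ) : Prop :=
  ∃ y x : ℕ, y ∉ X ∧ x ∈ X ∧ y + p = x ∧ X' = insert y (X.erase x)

/-- The partition represented by `X` has empty `p`-core: `X` can be reduced by
successive removals of `p`-hooks to the β-set `{0, 1, …, card X − 1}` of `∅`. -/
def HasEmptyPCore (p : ℕ) (X : Finset ℕ) : Prop :=
  Relation.ReflTransGen (RemovePHook p) X (Finset.range X.card)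

/-- The induced β-set on runner `γ`: `X_γ = {j : γ + j·p ∈ X}`. -/
def runner (p γ : ℕ) (X : Finset ℕ) : Finset ℕ :=
  (X.filter (fun x => x % p = γ)).image (fun x => x / p)

/-- The set of arm lengths of the diagonal hooks `h_{ii}` of `μ`. -/
def diagArms (μ : NPartition) : Set ℕ :=
  {a | ∃ d : ℕ, d < μ.parts d ∧ a + d + 1 = μ.parts d}

/-- The set of leg lengths of the diagonal hooks `h_{ii}` of `μ`. -/
def diagLegs (μ : NPartition) : Set ℕ :=
  {l | ∃ d : ℕ, d < μ.parts d ∧ l + d + 1 = μ.conj d}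

/-- `δ(μ)`: the set of hook lengths of the diagonal hooks of `μ`. -/
def diagHookLengths (μ : NPartition) : Set ℕ :=
  {e | ∃ d : ℕ, d < μ.parts d ∧ e + 2 * d + 1 = μ.parts d + μ.conj d}

/-- `(x', x)` is a diagonal hook of the β-set `X`: a hook which corresponds to a
hook `h_{ii}` on the diagonal of the Young diagram under the standard bijection. -/
def IsDiagHook (X : Finset ℕ) (x' x : ℕ) : Prop :=
  IsBetaHook X x' x ∧
  (X.filter (fun z => x ≤ z)).card =
    ((Finset.range (x' + 1)).filter (fun z => z ∉ X)).card

/-- `μ` is concentrated at `{γ, γ*}` (`γ* = p − 1 − γ`): every diagonal hook of `μ`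
has arm length congruent to `γ` or `γ*` modulo `p`. -/
def ConcentratedAt (p γ : ℕ) (μ : NPartition) : Prop :=
  ∀ a ∈ diagArms μ, a % p = γ ∨ a % p = p - 1 - γ

/-- `μ` is a `p`-core: no hook of its Young diagram has length `p`
(the hook at node `(i,j)`, 0-indexed, has length `parts i + conj j − i − j − 1`). -/
def IsPCore (p : ℕ) (μ : NPartition) : Prop :=
  ∀ i j : ℕ, j < μ.parts i → μ.parts i + μ.conj j ≠ p + i + j + 1

/-- `μ` is `γ`-packed: the set of arm lengths of diagonal hooks of `μ` congruent to
`γ` mod `p` is exactly `{γ + i·p : 0 ≤ i ≤ r}` for some `r ≥ 0`. -/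
def GammaPacked (p γ : ℕ) (μ : NPartition) : Prop :=
  ∃ r : ℕ, {a | a ∈ diagArms μ ∧ a % p = γ} = {a : ℕ | ∃ i ≤ r, a = γ + i * p}

/-- The β-set `X` admits no `p`-hook. -/
def NoPHooks (p : ℕ) (X : Finset ℕ) : Prop := ¬ ∃ X' : Finset ℕ, RemovePHook p X X'

/-- `μ0` is the `p`-core of the partition with β-set `X`: it is represented by a
β-set obtained from `X` by repeatedly removing `p`-hooks until none remain. -/
def IsPCoreOf (p : ℕ) (X : Finset ℕ) (μ0 : NPartition) : Prop :=
  ∃ X0 : Finset ℕ, Relation.ReflTransGen (RemovePHook p) X X0 ∧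
    NoPHooks p X0 ∧ IsBetaSet X0 μ0
lemma theta_card (X : Finset ℕ) (t : ℤ) (ht : IsTheta X t) : t + 1 = (X.card : ℤ) := by
  obtain ⟨h1, h2⟩ := ht
  have hm : ((t + 1).toNat : ℤ) = t + 1 := Int.toNat_of_nonneg (by omega)
  set m := (t + 1).toNat with hmdef
  have e1 : X.filter (fun x : ℕ => t < (x : ℤ)) = X.filter (fun x => ¬ x < m) := by
    apply Finset.filter_congr
    intro x _
    simp only [not_lt]
    omega
  have e2 : (Finset.range m).filter (fun y => y ∈ X) = X.filter (fun x => x < m) := by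
    ext z
    simp only [Finset.mem_filter, Finset.mem_range]
    tauto
  have c1 := Finset.card_filter_add_card_filter_not (s := X) (p := fun x => x < m)
  have c2 := Finset.card_filter_add_card_filter_not (s := Finset.range m)
    (p := fun y => y ∈ X)
  rw [Finset.card_range] at c2
  rw [e1] at h2
  rw [e2] at c2
  omega

lemma mem_runner {p γ : ℕ} (hγ : γ < p) (X : Finset ℕ) (j : ℕ) :
    j ∈ runner p γ X ↔ γ + j * p ∈ X := by
  have hp : 0 < p := lt_of_le_of_lt (Nat.zero_le _) hγ
  simp only [runner, Finset.mem_image, Finset.mem_filter]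
  constructor
  · rintro ⟨x, ⟨hx, hmod⟩, hdiv⟩
    subst hmod hdiv
    rwa [Nat.mod_add_div' x p]
  · intro h
    refine ⟨γ + j * p, ⟨h, ?_⟩, ?_⟩
    · rw [Nat.add_mul_mod_self_right, Nat.mod_eq_of_lt hγ]
    · rw [Nat.add_mul_div_right _ _ hp, Nat.div_eq_of_lt hγ, Nat.zero_add]

lemma runner_card (p γ : ℕ) (X : Finset ℕ) :
    (runner p γ X).card = (X.filter (fun x => x % p = γ)).card := by
  apply Finset.card_image_of_injOn
  intro a ha b hb hab
  simp only [Finset.coe_filter, Set.mem_setOf_eq] at ha hb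
  have h1 : a = p * (a / p) + a % p := (Nat.div_add_mod a p).symm
  have h2 : b = p * (b / p) + b % p := (Nat.div_add_mod b p).symm
  rw [ha.2] at h1
  rw [hb.2] at h2
  have hab' : a / p = b / p := hab
  rw [h1, h2, hab']

lemma runner_card_step {p γ : ℕ} {X X' : Finset ℕ} (h : RemovePHook p X X') :
    (runner p γ X').card = (runner p γ X).card := by
  obtain ⟨y, x, hy, hx, hyx, hX'⟩ := h
  subst hX'
  subst hyx
  rw [runner_card, runner_card]
  by_cases hmod : y % p = γ
  · have hxmod : (y + p) % p = γ := by rwa [Nat.add_mod_right]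
    have hxf : y + p ∈ X.filter (fun z => z % p = γ) := Finset.mem_filter.mpr ⟨hx, hxmod⟩
    have hyf : y ∉ (X.filter (fun z => z % p = γ)).erase (y + p) := by
      intro hmem
      exact hy (Finset.mem_filter.mp (Finset.mem_of_mem_erase hmem)).1
    rw [Finset.filter_insert, if_pos hmod, Finset.filter_erase,
        Finset.card_insert_of_notMem hyf, Finset.card_erase_of_mem hxf]
    have hpos := Finset.card_pos.mpr ⟨y + p, hxf⟩
    omega
  · have hxmod : ¬ (y + p) % p = γ := by rwa [Nat.add_mod_right]
    have hnm : y + p ∉ X.filter (fun z => z % p = γ) :=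
      fun hmem => hxmod (Finset.mem_filter.mp hmem).2
    rw [Finset.filter_insert, if_neg hmod, Finset.filter_erase,
        Finset.erase_eq_of_notMem hnm]

lemma runner_range {p γ : ℕ} (hγ : γ < p) (s : ℕ) :
    runner p γ (Finset.range (s * p)) = Finset.range s := by
  ext j
  rw [mem_runner hγ, Finset.mem_range, Finset.mem_range]
  constructor
  · intro h
    by_contra hs
    push_neg at hs
    have h1 : s * p ≤ j * p := Nat.mul_le_mul_right p hs
    omega
  · intro h
    have h1 : (j + 1) * p ≤ s * p := Nat.mul_le_mul_right p h
    have h2 : (j + 1) * p = j * p + p := by ring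
    omega

/-- (here the `p`-hook is `(y, x) = (γ + k·p, γ + (k+1)·p)`,
corresponding to the hook `(k, k+1)` of `X_γ` and the node `(i, j)` of `λ_γ`).
The `p`-hook lies entirely right of `θ` iff the node lies on an arm (`j > i`),
and entirely left of `θ` iff the node lies on a leg (`j < i`). -/
theorem stmt9 (p : ℕ) (hp : p.Prime) (hodd : Odd p)
    (X : Finset ℕ) (μ : NPartition) (t : ℤ)
    (hX : IsBetaSet X μ) (hsym : IsSymmetric μ) (hcore : HasEmptyPCore p X)
    (hcard : X.card % p = 0) (ht : IsTheta X t)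
    (γ k : ℕ) (hγ : γ < p)
    (hy : γ + k * p ∉ X) (hx : γ + (k + 1) * p ∈ X)
    (i j : ℕ)
    (hi : i = ((runner p γ X).filter (fun z => k + 1 ≤ z)).card)
    (hj : j = ((Finset.range (k + 1)).filter (fun z => z ∉ runner p γ X)).card) :
    (t < ((γ + k * p : ℕ) : ℤ) ↔ i < j) ∧
    (((γ + (k + 1) * p : ℕ) : ℤ) ≤ t ↔ j < i) := by
  have hp0 : 0 < p := hp.pos
  set s := X.card / p with hs_def
  have hN : X.card = s * p := (Nat.div_mul_cancel (Nat.dvd_of_mod_eq_zero hcard)).symm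
  have step : ∀ {A B : Finset ℕ}, Relation.ReflTransGen (RemovePHook p) A B →
      (runner p γ A).card = (runner p γ B).card := by
    intro A B h
    induction h with
    | refl => rfl
    | tail _ hstep ih => rw [ih]; exact (runner_card_step hstep).symm
  have hrc : (runner p γ X).card = s := by
    have h1 := step hcore
    rw [hN, runner_range hγ, Finset.card_range] at h1
    exact h1
  have htc : t + 1 = (X.card : ℤ) := theta_card X t ht
  have hkey : i + (k + 1) = j + s := by
    have c1 := Finset.card_filter_add_card_filter_not (s := runner p γ X)
      (p := fun z => k + 1 ≤ z)
    have c2 := Finset.card_filter_add_card_filter_not (s := Finset.range (k + 1))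
      (p := fun z => z ∉ runner p γ X)
    rw [Finset.card_range] at c2
    have e : (Finset.range (k + 1)).filter (fun z => ¬ z ∉ runner p γ X) =
        (runner p γ X).filter (fun z => ¬ k + 1 ≤ z) := by
      ext z
      simp only [Finset.mem_filter, Finset.mem_range, not_not, not_le]
      constructor
      · rintro ⟨h1, h2⟩; exact ⟨h2, by omega⟩
      · rintro ⟨h1, h2⟩; exact ⟨by omega, h1⟩
    rw [e] at c2
    rw [hi, hj]
    omega
  constructor
  · constructor
    · intro hlt
      have h1 : s * p ≤ γ + k * p := by omega
      have h2 : s ≤ k := by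
        by_contra hc
        push_neg at hc
        have h3 : (k + 1) * p ≤ s * p := Nat.mul_le_mul_right p hc
        have h4 : (k + 1) * p = k * p + p := by ring
        omega
      omega
    · intro hij
      have h2 : s ≤ k := by omega
      have h1 : s * p ≤ k * p := Nat.mul_le_mul_right p h2
      omega
  · constructor
    · intro hle
      have h1 : γ + (k + 1) * p < s * p := by omega
      have h2 : k + 1 < s := by
        by_contra hc
        push_neg at hc
        have h3 : s * p ≤ (k + 1) * p := Nat.mul_le_mul_right p hc
        omega
      omega
    · intro hji
      have h2 : k + 2 ≤ s := by omega
      have h1 : (k + 2) * p ≤ s * p := Nat.mul_le_mul_right p h2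
      have h3 : (k + 2) * p = (k + 1) * p + p := by ring
      omega
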